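/- Let F be a real n×m matrix. Then det(1 + Fᵀ·F) = Σ_P det(F_P)², where the sum runs over all patterns P = (I,J) of every size k = 0,1,…,m (I a k-subset of the rows, J a k-subset of the columns), the empty pattern contributing 1. -/

import Mathlib

open Matrix

/-- The minor of a real `n × m` matrix `F` given by a `k`-element set `I` of row indices and a
`k`-element set `J` of column indices. For `k = 0` it equals `1`. -/
def Matrix.minorOn {n m k : ℕ} (F : Matrix (Fin n) (Fin m) ℝ)
    (I : {s : Finset (Fin n) // s.card = k}) (J : {s : Finset (Fin m) // s.card = k}) : ℝ :=
  (F.submatrix (I.1.orderEmbOfFin I.2) (J.1.orderEmbOfFin J.2)).det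

namespace CBApp

open Equiv Equiv.Perm Finset Function

variable {R : Type*} [CommRing R]

/-- The generic term in the Leibniz-type expansion of `det (M * N)`. -/
def auxT {k : ℕ} {ι : Type*} [Fintype ι] (M : Matrix (Fin k) ι R) (N : Matrix ι (Fin k) R)
    (p : Fin k → ι) : R :=
  ∑ σ : Perm (Fin k), ((Equiv.Perm.sign σ : ℤ) : R) * ∏ x, M (σ x) (p x) * N (p x) x

theorem auxT_eq_zero {k : ℕ} {ι : Type*} [Fintype ι] {M : Matrix (Fin k) ι R}
    {N : Matrix ι (Fin k) R} {p : Fin k → ι} (H : ¬Function.Injective p) :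
    auxT M N p = 0 := by
  obtain ⟨i, j, hpij, hij⟩ : ∃ i j, p i = p j ∧ i ≠ j := by
    rw [Injective] at H
    push_neg at H
    obtain ⟨i, j, h1, h2⟩ := H
    exact ⟨i, j, h1, h2⟩
  exact
    sum_involution (fun σ _ => σ * Equiv.swap i j)
      (fun σ _ => by
        have : (∏ x, M (σ x) (p x)) = ∏ x, M ((σ * Equiv.swap i j) x) (p x) :=
          Fintype.prod_equiv (swap i j) _ _ (by simp [apply_swap_eq_self hpij])
        simp [this, sign_swap hij, -sign_swap', prod_mul_distrib])
      (fun σ _ _ => (not_congr mul_swap_eq_iff).mpr hij) (fun _ _ => mem_univ _) fun σ _ =>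
      mul_swap_involutive i j σ

theorem det_mul_expand {k : ℕ} {ι : Type*} [Fintype ι] [DecidableEq ι]
    (M : Matrix (Fin k) ι R) (N : Matrix ι (Fin k) R) :
    (M * N).det = ∑ p : Fin k → ι, auxT M N p := by
  unfold auxT
  simp only [det_apply', Matrix.mul_apply, prod_univ_sum, mul_sum, Fintype.piFinset_univ]
  rw [Finset.sum_comm]

theorem cauchy_binet {k n : ℕ} (A : Matrix (Fin k) (Fin n) R) (B : Matrix (Fin n) (Fin k) R) :
    (A * B).det = ∑ I : {s : Finset (Fin n) // s.card = k},
      (A.submatrix id (I.1.orderEmbOfFin I.2)).det * (B.submatrix (I.1.orderEmbOfFin I.2) id).det := by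
  classical
  calc (A * B).det = ∑ p : Fin k → Fin n, auxT A B p := det_mul_expand A B
    _ = ∑ p ∈ univ.filter (fun p : Fin k → Fin n => Function.Injective p), auxT A B p := by
        refine (sum_subset (filter_subset _ _) fun p _ hp => ?_).symm
        refine auxT_eq_zero ?_
        simpa using hp
    _ = ∑ x ∈ (univ : Finset {s : Finset (Fin n) // s.card = k}).sigma
          (fun _ => (univ : Finset (Fin k → Fin k)).filter (fun q => Function.Injective q)),
          auxT A B (fun i => x.1.1.orderEmbOfFin x.1.2 (x.2 i)) := by
        refine (Finset.sum_bij (fun x _ => fun i => x.1.1.orderEmbOfFin x.1.2 (x.2 i))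
          ?_ ?_ ?_ ?_).symm
        · rintro ⟨I, q⟩ hx
          simp only [mem_sigma, mem_filter, mem_univ, true_and] at hx ⊢
          exact (I.1.orderEmbOfFin I.2).injective.comp hx
        · rintro ⟨I, q⟩ hx ⟨I', q'⟩ hx' h
          simp only [mem_sigma, mem_filter, mem_univ, true_and] at hx hx'
          have hq : Function.Surjective q := (Finite.injective_iff_bijective.1 hx).2
          have hq' : Function.Surjective q' := (Finite.injective_iff_bijective.1 hx').2
          have hfun : (fun i => I.1.orderEmbOfFin I.2 (q i))
              = fun i => I'.1.orderEmbOfFin I'.2 (q' i) := h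
          obtain rfl : I = I' := by
            apply Subtype.ext
            apply Finset.coe_injective
            have h5 : Set.range (fun i => I.1.orderEmbOfFin I.2 (q i))
                = Set.range (fun i => I'.1.orderEmbOfFin I'.2 (q' i)) := by rw [hfun]
            have h6 : Set.range (fun i => I.1.orderEmbOfFin I.2 (q i))
                = Set.range (I.1.orderEmbOfFin I.2) :=
              hq.range_comp _
            have h7 : Set.range (fun i => I'.1.orderEmbOfFin I'.2 (q' i))
                = Set.range (I'.1.orderEmbOfFin I'.2) :=
              hq'.range_comp _
            rw [← Finset.range_orderEmbOfFin I.1 I.2, ← Finset.range_orderEmbOfFin I'.1 I'.2,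
              ← h6, ← h7, h5]
          have : q = q' := by
            funext i
            exact (I.1.orderEmbOfFin I.2).injective (congrFun hfun i)
          rw [this]
        · intro p hp
          simp only [mem_filter, mem_univ, true_and] at hp
          have hcard : (univ.image p).card = k := by
            rw [Finset.card_image_of_injective _ hp, card_univ, Fintype.card_fin]
          refine ⟨⟨⟨univ.image p, hcard⟩,
            fun i => ((univ.image p).orderIsoOfFin hcard).symm
              ⟨p i, Finset.mem_image_of_mem p (mem_univ i)⟩⟩, ?_, ?_⟩
          · simp only [mem_sigma, mem_filter, mem_univ, true_and]
            intro a b hab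
            apply hp
            have := congrArg ((univ.image p).orderIsoOfFin hcard) hab
            simpa [Subtype.ext_iff] using this
          · funext i
            show (univ.image p).orderEmbOfFin hcard
              (((univ.image p).orderIsoOfFin hcard).symm
                ⟨p i, Finset.mem_image_of_mem p (mem_univ i)⟩) = p i
            rw [← Finset.coe_orderIsoOfFin_apply, OrderIso.apply_symm_apply]
        · intro a ha
          rfl
    _ = ∑ I : {s : Finset (Fin n) // s.card = k},
          ∑ q ∈ (univ : Finset (Fin k → Fin k)).filter (fun q => Function.Injective q),
            auxT A B (fun i => I.1.orderEmbOfFin I.2 (q i)) := Finset.sum_sigma _ _ _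
    _ = ∑ I : {s : Finset (Fin n) // s.card = k},
          ∑ q : Fin k → Fin k, auxT A B (fun i => I.1.orderEmbOfFin I.2 (q i)) := by
        refine Finset.sum_congr rfl fun I _ => ?_
        refine sum_subset (filter_subset _ _) fun q _ hq => ?_
        simp only [mem_filter, mem_univ, true_and] at hq
        refine auxT_eq_zero fun hinj => ?_
        exact hq fun x y hxy => hinj (congrArg (I.1.orderEmbOfFin I.2) hxy)
    _ = ∑ I : {s : Finset (Fin n) // s.card = k},
          ((A.submatrix id (I.1.orderEmbOfFin I.2)) * (B.submatrix (I.1.orderEmbOfFin I.2) id)).det := by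
        refine Finset.sum_congr rfl fun I _ => ?_
        rw [det_mul_expand]
        rfl
    _ = _ := by
        refine Finset.sum_congr rfl fun I _ => ?_
        exact det_mul _ _

/-- `s.piecewise M 1` as a matrix. -/
def pcw {m : ℕ} (s : Finset (Fin m)) (M : Matrix (Fin m) (Fin m) R) :
    Matrix (Fin m) (Fin m) R :=
  s.piecewise M (1 : Matrix (Fin m) (Fin m) R)

theorem det_one_add_expand {m : ℕ} (M : Matrix (Fin m) (Fin m) R) :
    (1 + M).det = ∑ s : Finset (Fin m), (pcw s M).det := by
  rw [add_comm]
  have h0 := (Matrix.detRowAlternating (R := R) (n := Fin m)).toMultilinearMap.map_add_univ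
    M (1 : Matrix (Fin m) (Fin m) R)
  simp only [AlternatingMap.coe_multilinearMap] at h0
  exact h0

theorem det_piecewise_one {m k : ℕ} (M : Matrix (Fin m) (Fin m) R) (s : Finset (Fin m))
    (hs : s.card = k) :
    (pcw s M).det
      = (M.submatrix (s.orderEmbOfFin hs) (s.orderEmbOfFin hs)).det := by
  classical
  have h1 : (pcw s M).det
      = ((pcw s M).submatrix
          (Equiv.sumCompl (· ∈ s)) (Equiv.sumCompl (· ∈ s))).det :=
    (Matrix.det_submatrix_equiv_self _ _).symm
  have h2 : (pcw s M).submatrix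
        (Equiv.sumCompl (· ∈ s)) (Equiv.sumCompl (· ∈ s))
      = Matrix.fromBlocks
          (M.submatrix (Subtype.val : {x // x ∈ s} → Fin m) Subtype.val)
          (M.submatrix (Subtype.val : {x // x ∈ s} → Fin m)
            (Subtype.val : {x // ¬ x ∈ s} → Fin m)) 0 1 := by
    ext i j
    cases i with
    | inl a =>
      cases j with
      | inl b =>
        rw [Matrix.submatrix_apply]
        simp [pcw, Matrix.submatrix_apply, Finset.piecewise_eq_of_mem _ _ _ a.2]
        erw [Finset.piecewise_eq_of_mem _ _ _ a.2]
      | inr b =>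
        rw [Matrix.submatrix_apply]
        simp [pcw, Matrix.submatrix_apply, Finset.piecewise_eq_of_mem _ _ _ a.2]
        erw [Finset.piecewise_eq_of_mem _ _ _ a.2]
    | inr a =>
      cases j with
      | inl b =>
        have hne : (a : Fin m) ≠ (b : Fin m) := fun h => a.2 (h ▸ b.2)
        rw [Matrix.submatrix_apply]
        simp only [pcw, Matrix.submatrix_apply, Equiv.sumCompl_apply_inr,
          Equiv.sumCompl_apply_inl, Matrix.fromBlocks_apply₂₁,
          Finset.piecewise_eq_of_notMem _ _ _ a.2]
        erw [Finset.piecewise_eq_of_notMem _ _ _ a.2]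
        rw [Matrix.one_apply_ne hne]
        simp
      | inr b =>
        rw [Matrix.submatrix_apply]
        simp only [pcw, Matrix.submatrix_apply, Equiv.sumCompl_apply_inr,
          Matrix.fromBlocks_apply₂₂, Finset.piecewise_eq_of_notMem _ _ _ a.2]
        erw [Finset.piecewise_eq_of_notMem _ _ _ a.2]
        rw [Matrix.one_apply, Matrix.one_apply]
        simp [Subtype.ext_iff]
  rw [h1, h2, Matrix.det_fromBlocks_zero₂₁, Matrix.det_one, mul_one]
  have h3 : M.submatrix (s.orderEmbOfFin hs) (s.orderEmbOfFin hs)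
      = (M.submatrix (Subtype.val : {x // x ∈ s} → Fin m) Subtype.val).submatrix
          (s.orderIsoOfFin hs).toEquiv (s.orderIsoOfFin hs).toEquiv := by
    ext i j
    simp [Matrix.submatrix_apply]
  rw [h3, Matrix.det_submatrix_equiv_self]

end CBApp

open CBApp Finset in
private theorem key_minor {n m k : ℕ} (F : Matrix (Fin n) (Fin m) ℝ) (J : Finset (Fin m))
    (hJ : J.card = k) :
    ((Fᵀ * F).submatrix (J.orderEmbOfFin hJ) (J.orderEmbOfFin hJ)).det
      = ∑ I : {s : Finset (Fin n) // s.card = k},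
          ((F.submatrix (I.1.orderEmbOfFin I.2) (J.orderEmbOfFin hJ)).det) ^ 2 := by
  have h0 : (Fᵀ * F).submatrix (J.orderEmbOfFin hJ) (J.orderEmbOfFin hJ)
      = (F.submatrix id (J.orderEmbOfFin hJ))ᵀ * (F.submatrix id (J.orderEmbOfFin hJ)) := by
    ext a b
    simp [Matrix.mul_apply]
  rw [h0, cauchy_binet]
  refine Finset.sum_congr rfl fun I _ => ?_
  have h1 : ((F.submatrix id (J.orderEmbOfFin hJ))ᵀ).submatrix id (I.1.orderEmbOfFin I.2)
      = (F.submatrix (I.1.orderEmbOfFin I.2) (J.orderEmbOfFin hJ))ᵀ := by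
    ext a b
    simp
  have h2 : (F.submatrix id (J.orderEmbOfFin hJ)).submatrix (I.1.orderEmbOfFin I.2) id
      = F.submatrix (I.1.orderEmbOfFin I.2) (J.orderEmbOfFin hJ) := by
    ext a b
    simp
  rw [h1, h2, Matrix.det_transpose, sq]

private theorem sum_card_fiber {m : ℕ} {β : Type*} [AddCommMonoid β]
    (G : (k : ℕ) → {s : Finset (Fin m) // s.card = k} → β) :
    ∑ s : Finset (Fin m), G s.card ⟨s, rfl⟩
      = ∑ k ∈ Finset.range (m + 1), ∑ J : {s : Finset (Fin m) // s.card = k}, G k J := by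
  rw [← Finset.sum_fiberwise_of_maps_to (g := fun s : Finset (Fin m) => s.card)
      (t := Finset.range (m + 1))
      (fun s _ => Finset.mem_range.2 (Nat.lt_succ_of_le (by simpa using Finset.card_le_univ s)))
      (fun s => G s.card ⟨s, rfl⟩)]
  refine Finset.sum_congr rfl fun k _ => ?_
  rw [Finset.sum_subtype (p := fun s : Finset (Fin m) => s.card = k) _
    (by simp) (fun s => G s.card ⟨s, rfl⟩)]
  refine Finset.sum_congr rfl fun J _ => ?_
  obtain ⟨s, hs⟩ := J
  subst hs
  rfl

/-- For a real `n × m` matrix `F`, `det(1 + Fᵀ F) = Σ_P det(F_P)²`, summing over all patterns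
`P = (I, J)` of every size `k = 0, 1, …, m`; the empty pattern contributes `1`. -/
theorem det_one_add_transpose_mul_self {n m : ℕ} (F : Matrix (Fin n) (Fin m) ℝ) :
    (1 + Fᵀ * F).det =
      ∑ k ∈ Finset.range (m + 1),
        ∑ I : {s : Finset (Fin n) // s.card = k}, ∑ J : {s : Finset (Fin m) // s.card = k},
          (F.minorOn I J) ^ 2 := by
  classical
  calc (1 + Fᵀ * F).det
      = ∑ s : Finset (Fin m), (CBApp.pcw s (Fᵀ * F)).det := CBApp.det_one_add_expand _
    _ = ∑ s : Finset (Fin m),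
          (fun k (J : {t : Finset (Fin m) // t.card = k}) =>
            ∑ I : {t : Finset (Fin n) // t.card = k}, (F.minorOn I J) ^ 2) s.card ⟨s, rfl⟩ := by
        refine Finset.sum_congr rfl fun s _ => ?_
        rw [CBApp.det_piecewise_one (Fᵀ * F) s rfl, key_minor F s rfl]
        rfl
    _ = ∑ k ∈ Finset.range (m + 1), ∑ J : {s : Finset (Fin m) // s.card = k},
          ∑ I : {s : Finset (Fin n) // s.card = k}, (F.minorOn I J) ^ 2 :=
        sum_card_fiber
          (fun k (J : {t : Finset (Fin m) // t.card = k}) =>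
            ∑ I : {t : Finset (Fin n) // t.card = k}, (F.minorOn I J) ^ 2)
    _ = _ := Finset.sum_congr rfl fun k _ => Finset.sum_comm
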